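/- Let M ≥ 0 and define P(z,w) = 4 + M − z − z⁻¹ − w − w⁻¹ for z, w ∈ ℂ∖{0}. Then for all r₁, r₂ > 0, the set Z = {(z,w) ∈ ℂ² : |z| = r₁, |w| = r₂, P(z,w) = 0} contains at most two points, and Z is invariant under complex conjugation: if (z,w) ∈ Z then (z̄, w̄) ∈ Z. -/

import Mathlib

set_option maxHeartbeats 1000000

private lemma key' (a b s u : ℝ) (ha : 2 < a) (hb : 2 ≤ b) (hs : 4 ≤ s)
    (hu1 : -1 ≤ u) (hu2 : u ≤ 1) (hv2 : s - b*u ≤ a) :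
    0 < 4*(b^2-a^2)*u + (a^2-4)*b*s := by
  have hb0 : 0 < b := by linarith
  rcases le_or_gt b a with h | h
  · have h1 : 4*(b^2-a^2) ≤ 4*(b^2-a^2)*u := by nlinarith [mul_nonneg (show (0:ℝ) ≤ a^2-b^2 by nlinarith) (show (0:ℝ) ≤ 1-u by linarith)]
    have hbs : 8 ≤ b*s := by nlinarith
    have h2 : (a^2-4)*8 ≤ (a^2-4)*(b*s) := by
      have : (0:ℝ) ≤ a^2-4 := by nlinarith
      nlinarith [mul_nonneg this (show (0:ℝ) ≤ b*s - 8 by linarith)]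
    nlinarith [h1, h2]
  · have hbu : s - a ≤ b*u := by linarith
    have ha4 : 0 < a^2 - 4 := by nlinarith
    have hE : 0 < 4*(b^2-a^2)*(b*u) + (a^2-4)*(b^2*s) := by
      have hc : (0:ℝ) ≤ b^2 - a^2 := by nlinarith
      have h1 : 4*(b^2-a^2)*(s-a) ≤ 4*(b^2-a^2)*(b*u) := by
        nlinarith [mul_nonneg hc (show (0:ℝ) ≤ b*u - (s-a) by linarith)]
      rcases le_or_gt s a with hsa | hsa
      · have h2 : 4*(a-s) < (a^2-4)*s := by nlinarith
        have h3 : 4*(b^2-a^2)*(a-s) ≤ 4*b^2*(a-s) := by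
          nlinarith [mul_nonneg (sq_nonneg a) (show (0:ℝ) ≤ a - s by linarith)]
        nlinarith [h1, h3, mul_pos (show (0:ℝ) < b^2 by positivity) (show (0:ℝ) < (a^2-4)*s - 4*(a-s) by linarith)]
      · have h4 : (0:ℝ) ≤ 4*(b^2-a^2)*(s-a) := by
          nlinarith [mul_nonneg hc (show (0:ℝ) ≤ s - a by linarith)]
        nlinarith [h1, h4, mul_pos ha4 (mul_pos (mul_pos hb0 hb0) (show (0:ℝ) < s by linarith))]
    nlinarith [hE, mul_pos hb0 hb0]

private lemma keyScaled (s r₁ r₂ x X : ℝ) (hs : 4 ≤ s) (h1 : 0 < r₁) (h2 : 0 < r₂)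
    (hr1 : r₁ ≠ 1) (hx : x^2 ≤ r₁^2) (hX : X^2 ≤ r₂^2)
    (e1 : s*(r₁^2*r₂^2) = x*(r₂^2*(r₁^2+1)) + X*(r₁^2*(r₂^2+1))) :
    0 < 4*(r₁^2*(r₂^2-1)^2 - r₂^2*(r₁^2-1)^2)*X + s*r₂^2*(r₂^2+1)*(r₁^2-1)^2 := by
  have hr1sq : 0 < (r₁-1)^2 := by
    have h := pow_ne_zero 2 (sub_ne_zero.mpr hr1)
    exact lt_of_le_of_ne (sq_nonneg _) (Ne.symm h)
  have ha : 2 < (r₁^2+1)/r₁ := by rw [lt_div_iff₀ h1]; nlinarith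
  have hb : 2 ≤ (r₂^2+1)/r₂ := by rw [le_div_iff₀ h2]; nlinarith [sq_nonneg (r₂-1)]
  have hX1 : -r₂ ≤ X := by nlinarith
  have hX2 : X ≤ r₂ := by nlinarith
  have hx2 : x ≤ r₁ := by nlinarith
  have hu1 : -1 ≤ X/r₂ := by rw [le_div_iff₀ h2]; linarith
  have hu2 : X/r₂ ≤ 1 := by rw [div_le_iff₀ h2]; linarith
  have hv2 : s - ((r₂^2+1)/r₂)*(X/r₂) ≤ (r₁^2+1)/r₁ := by
    have heq : s - ((r₂^2+1)/r₂)*(X/r₂) = x*(r₁^2+1)/r₁^2 := by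
      field_simp
      linear_combination e1
    rw [heq, div_le_div_iff₀ (by positivity) h1]
    nlinarith [mul_nonneg (show (0:ℝ) ≤ r₁^2+1 by positivity) (show (0:ℝ) ≤ r₁ - x by linarith)]
  have h := key' ((r₁^2+1)/r₁) ((r₂^2+1)/r₂) s (X/r₂) ha hb hs hu1 hu2 hv2
  have hT : 4*(r₁^2*(r₂^2-1)^2 - r₂^2*(r₁^2-1)^2)*X + s*r₂^2*(r₂^2+1)*(r₁^2-1)^2
      = (4*(((r₂^2+1)/r₂)^2-((r₁^2+1)/r₁)^2)*(X/r₂) + (((r₁^2+1)/r₁)^2-4)*((r₂^2+1)/r₂)*s) * (r₁^2*r₂^3) := by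
    field_simp
    ring
  rw [hT]
  exact mul_pos h (by positivity)

private lemma uniqX (s r₁ r₂ x y X Y x' y' X' Y' : ℝ) (hs : 4 ≤ s) (h1 : 0 < r₁) (h2 : 0 < r₂)
    (e1 : s*(r₁^2*r₂^2) = x*(r₂^2*(r₁^2+1)) + X*(r₁^2*(r₂^2+1)))
    (e2 : y*(r₂^2*(r₁^2-1)) + Y*(r₁^2*(r₂^2-1)) = 0)
    (c1 : x^2+y^2 = r₁^2) (c2 : X^2+Y^2 = r₂^2)
    (e1' : s*(r₁^2*r₂^2) = x'*(r₂^2*(r₁^2+1)) + X'*(r₁^2*(r₂^2+1)))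
    (e2' : y'*(r₂^2*(r₁^2-1)) + Y'*(r₁^2*(r₂^2-1)) = 0)
    (c1' : x'^2+y'^2 = r₁^2) (c2' : X'^2+Y'^2 = r₂^2) :
    X' = X := by
  by_cases hr1 : r₁ = 1
  · subst hr1
    by_cases hr2 : r₂ = 1
    · subst hr2
      have hXle : X ≤ 1 := by linarith [sq_nonneg (X-1), sq_nonneg Y]
      have hxle : x ≤ 1 := by linarith [sq_nonneg (x-1), sq_nonneg y]
      have hXle' : X' ≤ 1 := by linarith [sq_nonneg (X'-1), sq_nonneg Y']
      have hxle' : x' ≤ 1 := by linarith [sq_nonneg (x'-1), sq_nonneg y']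
      have hX1 : X = 1 := by linarith
      have hX1' : X' = 1 := by linarith
      rw [hX1, hX1']
    · -- r₂ ≠ 1 : Y = 0 and X = r₂, similarly X' = r₂
      have hD : r₂^2 - 1 ≠ 0 := by
        intro h
        rcases mul_eq_zero.mp (show (r₂-1)*(r₂+1) = 0 by linear_combination h) with h' | h'
        · exact hr2 (by linarith)
        · linarith
      have hxle : x ≤ 1 := by linarith [sq_nonneg (x-1), sq_nonneg y]
      have hxle' : x' ≤ 1 := by linarith [sq_nonneg (x'-1), sq_nonneg y']
      have hY : Y = 0 := by
        have h := e2
        have h' : Y * (r₂^2-1) = 0 := by linear_combination e2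
        rcases mul_eq_zero.mp h' with h'' | h''
        · exact h''
        · exact absurd h'' hD
      have hY' : Y' = 0 := by
        have h' : Y' * (r₂^2-1) = 0 := by linear_combination e2'
        rcases mul_eq_zero.mp h' with h'' | h''
        · exact h''
        · exact absurd h'' hD
      rw [hY] at c2
      rw [hY'] at c2'
      have t1 : 4*r₂^2 ≤ s*r₂^2 := by
        linarith [mul_nonneg (show (0:ℝ) ≤ s-4 by linarith) (sq_nonneg r₂)]
      have t2 : 2*x*r₂^2 ≤ 2*r₂^2 := by
        linarith [mul_nonneg (show (0:ℝ) ≤ 1-x by linarith) (sq_nonneg r₂)]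
      have t2' : 2*x'*r₂^2 ≤ 2*r₂^2 := by
        linarith [mul_nonneg (show (0:ℝ) ≤ 1-x' by linarith) (sq_nonneg r₂)]
      have hXr : X = r₂ := by
        rcases mul_eq_zero.mp (show (X-r₂)*(X+r₂) = 0 by linear_combination c2) with h | h
        · linarith [sub_eq_zero.mp h]
        · exfalso
          have e1b : s*r₂^2 + r₂^3 + r₂ = 2*x*r₂^2 := by linear_combination e1 + (r₂^2+1)*h
          linarith [e1b, t1, t2, t2', pow_pos h2 3, mul_pos h2 h2, h2]
      have hXr' : X' = r₂ := by
        rcases mul_eq_zero.mp (show (X'-r₂)*(X'+r₂) = 0 by linear_combination c2') with h | h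
        · linarith [sub_eq_zero.mp h]
        · exfalso
          have e1b : s*r₂^2 + r₂^3 + r₂ = 2*x'*r₂^2 := by linear_combination e1' + (r₂^2+1)*h
          linarith [e1b, t1, t2, t2', pow_pos h2 3, mul_pos h2 h2, h2]
      rw [hXr, hXr']
  · by_contra hne
    have ht : X' - X ≠ 0 := sub_ne_zero.mpr hne
    have hsq : (y*(r₂^2*(r₁^2-1)))^2 = (Y*(r₁^2*(r₂^2-1)))^2 := by
      have hA : y*(r₂^2*(r₁^2-1)) = -(Y*(r₁^2*(r₂^2-1))) := by linarith
      rw [hA]; ring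
    have hsq' : (y'*(r₂^2*(r₁^2-1)))^2 = (Y'*(r₁^2*(r₂^2-1)))^2 := by
      have hA : y'*(r₂^2*(r₁^2-1)) = -(Y'*(r₁^2*(r₂^2-1))) := by linarith
      rw [hA]; ring
    have hStar : (r₁^2 - x^2)*((r₁^2-1)^2*r₂^4) = (r₂^2 - X^2)*((r₂^2-1)^2*r₁^4) := by
      linear_combination hsq - (r₂^4*(r₁^2-1)^2)*c1 + (r₁^4*(r₂^2-1)^2)*c2
    have hStar' : (r₁^2 - x'^2)*((r₁^2-1)^2*r₂^4) = (r₂^2 - X'^2)*((r₂^2-1)^2*r₁^4) := by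
      linear_combination hsq' - (r₂^4*(r₁^2-1)^2)*c1' + (r₁^4*(r₂^2-1)^2)*c2'
    have hDiff : (x - x')*(r₂^2*(r₁^2+1)) = (X' - X)*(r₁^2*(r₂^2+1)) := by
      linear_combination e1' - e1
    have hfac : (X' - X) * (((x'+x)*(r₂^2*(r₂^2+1)*(r₁^2-1)^2) + (X'+X)*(r₁^2*(r₁^2+1)*(r₂^2-1)^2)) * r₁^2) = 0 := by
      linear_combination (-(r₁^2+1))*hStar + (r₁^2+1)*hStar' - ((x'+x)*(r₂^2*(r₁^2-1)^2))*hDiff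
    have hInner : (x'+x)*(r₂^2*(r₂^2+1)*(r₁^2-1)^2) + (X'+X)*(r₁^2*(r₁^2+1)*(r₂^2-1)^2) = 0 := by
      rcases mul_eq_zero.mp hfac with h | h
      · exact absurd h ht
      · rcases mul_eq_zero.mp h with h' | h'
        · exact h'
        · exact absurd h' (by positivity)
    have hSum : (4*(r₁^2*(r₂^2-1)^2 - r₂^2*(r₁^2-1)^2)*(X+X') + 2*s*r₂^2*(r₂^2+1)*(r₁^2-1)^2) * r₁^2 = 0 := by
      linear_combination (r₁^2+1)*hInner + ((r₂^2+1)*(r₁^2-1)^2)*e1 + ((r₂^2+1)*(r₁^2-1)^2)*e1'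
    have k1 := keyScaled s r₁ r₂ x X hs h1 h2 hr1 (by linarith [sq_nonneg y]) (by linarith [sq_nonneg Y]) e1
    have k2 := keyScaled s r₁ r₂ x' X' hs h1 h2 hr1 (by linarith [sq_nonneg y']) (by linarith [sq_nonneg Y']) e1'
    have hpos : 0 < 4*(r₁^2*(r₂^2-1)^2 - r₂^2*(r₁^2-1)^2)*(X+X') + 2*s*r₂^2*(r₂^2+1)*(r₁^2-1)^2 := by
      linarith [k1, k2]
    have hmul := mul_pos hpos (mul_pos h1 h1)
    nlinarith [hmul, hSum]

private lemma unpack (M r₁ r₂ : ℝ) (h1 : 0 < r₁) (h2 : 0 < r₂) (z w : ℂ)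
    (hz : ‖z‖ = r₁) (hw : ‖w‖ = r₂)
    (he : 4 + (M:ℂ) - z - z⁻¹ - w - w⁻¹ = 0) :
    ((4+M)*(r₁^2*r₂^2) = z.re*(r₂^2*(r₁^2+1)) + w.re*(r₁^2*(r₂^2+1))) ∧
    (z.im*(r₂^2*(r₁^2-1)) + w.im*(r₁^2*(r₂^2-1)) = 0) ∧
    (z.re^2+z.im^2 = r₁^2) ∧ (w.re^2+w.im^2 = r₂^2) := by
  have hnz : Complex.normSq z = r₁^2 := by rw [← Complex.sq_norm, hz]
  have hnw : Complex.normSq w = r₂^2 := by rw [← Complex.sq_norm, hw]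
  have c1 : z.re^2 + z.im^2 = r₁^2 := by rw [← hnz, Complex.normSq_apply]; ring
  have c2 : w.re^2 + w.im^2 = r₂^2 := by rw [← hnw, Complex.normSq_apply]; ring
  have hre := congrArg Complex.re he
  have him := congrArg Complex.im he
  simp only [Complex.add_re, Complex.sub_re, Complex.ofReal_re, Complex.inv_re,
    Complex.inv_im, Complex.zero_re, Complex.zero_im, Complex.add_im, Complex.sub_im,
    Complex.ofReal_im, hnz, hnw] at hre him
  norm_num at hre him
  have hr1 : r₁^2 ≠ 0 := by positivity
  have hr2 : r₂^2 ≠ 0 := by positivity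
  constructor
  · field_simp at hre
    linarith [hre]
  constructor
  · field_simp at him
    linarith [him]
  exact ⟨c1, c2⟩

private lemma main_pair (M r₁ r₂ : ℝ) (hM : 0 ≤ M) (h1 : 0 < r₁) (h2 : 0 < r₂)
    (z w z' w' : ℂ) (hz : ‖z‖ = r₁) (hw : ‖w‖ = r₂)
    (hz' : ‖z'‖ = r₁) (hw' : ‖w'‖ = r₂)
    (he : 4 + (M:ℂ) - z - z⁻¹ - w - w⁻¹ = 0)
    (he' : 4 + (M:ℂ) - z' - z'⁻¹ - w' - w'⁻¹ = 0) :
    (z' = z ∧ w' = w) ∨ (z' = (starRingEnd ℂ) z ∧ w' = (starRingEnd ℂ) w) := by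
  obtain ⟨e1, e2, c1, c2⟩ := unpack M r₁ r₂ h1 h2 z w hz hw he
  obtain ⟨e1', e2', c1', c2'⟩ := unpack M r₁ r₂ h1 h2 z' w' hz' hw' he'
  have hs : 4 ≤ 4 + M := by linarith
  have hXX : w'.re = w.re :=
    uniqX (4+M) r₁ r₂ z.re z.im w.re w.im z'.re z'.im w'.re w'.im hs h1 h2
      e1 e2 c1 c2 e1' e2' c1' c2'
  have hxx : z'.re = z.re := by
    have hA : z.re * (r₂^2*(r₁^2+1)) = z'.re * (r₂^2*(r₁^2+1)) := by
      rw [hXX] at e1'; linarith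
    exact (mul_right_cancel₀ (show (r₂^2*(r₁^2+1)) ≠ 0 by positivity) hA).symm
  have hy2 : z'.im^2 = z.im^2 := by
    rw [hxx] at c1'; linarith
  have hY2 : w'.im^2 = w.im^2 := by
    rw [hXX] at c2'; linarith
  -- force lemma for the degenerate r₁ = r₂ = 1 situation
  have force : r₁^2 - 1 = 0 → r₂^2 - 1 = 0 → z.im = 0 := by
    intro hC hD
    have hzre : z.re ≤ 1 := by linarith [sq_nonneg (z.re - 1), sq_nonneg z.im, c1, hC]
    have hwre : w.re ≤ 1 := by linarith [sq_nonneg (w.re - 1), sq_nonneg w.im, c2, hD]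
    have e1c : 4 + M = 2*z.re + 2*w.re := by
      linear_combination e1 - ((4+M)*r₂^2 - z.re*r₂^2 - w.re*(r₂^2+1))*hC
        - ((4+M) - 2*z.re - w.re)*hD
    have hzre' : z.re = 1 := by linarith
    have hsq1 : z.re^2 = 1 := by rw [hzre']; norm_num
    have : z.im^2 = 0 := by linarith [c1, hC, hsq1]
    exact pow_eq_zero_iff (by norm_num) |>.mp this
  rcases mul_eq_zero.mp (show (z'.im - z.im)*(z'.im + z.im) = 0 by linear_combination hy2) with hy | hy <;>
  rcases mul_eq_zero.mp (show (w'.im - w.im)*(w'.im + w.im) = 0 by linear_combination hY2) with hY | hY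
  · exact Or.inl ⟨Complex.ext hxx (by linarith), Complex.ext hXX (by linarith)⟩
  · -- z'.im = z.im, w'.im = -w.im
    have hyv : z'.im = z.im := by linarith
    have hYv : w'.im = -w.im := by linarith
    by_cases hY0 : w.im = 0
    · exact Or.inl ⟨Complex.ext hxx hyv, Complex.ext hXX (by rw [hYv, hY0, neg_zero])⟩
    · have hD : r₂^2 - 1 = 0 := by
        have h7 : (2*r₁^2) * (w.im * (r₂^2-1)) = (2*r₁^2) * 0 := by
          rw [hyv, hYv] at e2'; linear_combination e2 - e2'
        have h8 := mul_left_cancel₀ (show (2*r₁^2) ≠ 0 by positivity) h7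
        rcases mul_eq_zero.mp h8 with h | h
        · exact absurd h hY0
        · exact h
      by_cases hy0 : z.im = 0
      · refine Or.inr ⟨Complex.ext hxx ?_, Complex.ext hXX ?_⟩
        · rw [hyv, hy0, Complex.conj_im, hy0, neg_zero]
        · rw [hYv, Complex.conj_im]
      · exfalso
        have hyC : (2*r₂^2) * (z.im * (r₁^2-1)) = (2*r₂^2) * 0 := by
          rw [hyv, hYv] at e2'; linear_combination e2 + e2'
        have h8 := mul_left_cancel₀ (show (2*r₂^2) ≠ 0 by positivity) hyC
        rcases mul_eq_zero.mp h8 with h | h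
        · exact absurd h hy0
        · exact hy0 (force h hD)
  · -- z'.im = -z.im, w'.im = w.im
    have hyv : z'.im = -z.im := by linarith
    have hYv : w'.im = w.im := by linarith
    by_cases hy0 : z.im = 0
    · exact Or.inl ⟨Complex.ext hxx (by rw [hyv, hy0, neg_zero]), Complex.ext hXX hYv⟩
    · have hC : r₁^2 - 1 = 0 := by
        have h7 : (2*r₂^2) * (z.im * (r₁^2-1)) = (2*r₂^2) * 0 := by
          rw [hyv, hYv] at e2'; linear_combination e2 - e2'
        have h8 := mul_left_cancel₀ (show (2*r₂^2) ≠ 0 by positivity) h7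
        rcases mul_eq_zero.mp h8 with h | h
        · exact absurd h hy0
        · exact h
      by_cases hY0 : w.im = 0
      · refine Or.inr ⟨Complex.ext hxx ?_, Complex.ext hXX ?_⟩
        · rw [hyv, Complex.conj_im]
        · rw [hYv, hY0, Complex.conj_im, hY0, neg_zero]
      · exfalso
        have hYD : (2*r₁^2) * (w.im * (r₂^2-1)) = (2*r₁^2) * 0 := by
          rw [hyv, hYv] at e2'; linear_combination e2 + e2'
        have h8 := mul_left_cancel₀ (show (2*r₁^2) ≠ 0 by positivity) hYD
        rcases mul_eq_zero.mp h8 with h | h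
        · exact absurd h hY0
        · exact hy0 (force hC h)
  · exact Or.inr ⟨Complex.ext hxx (by rw [Complex.conj_im]; linarith),
      Complex.ext hXX (by rw [Complex.conj_im]; linarith)⟩



/-- Harnack property of the spectral curve of the massive Laplacian on `ℤ²`:
for `M ≥ 0`, the zero set of `P(z,w) = 4 + M - z - z⁻¹ - w - w⁻¹` meets each torus
`{|z| = r₁, |w| = r₂}` in at most two points, and this intersection is invariant
under complex conjugation. -/

theorem stmt_7 (M : ℝ) (hM : 0 ≤ M) (r₁ r₂ : ℝ) (h1 : 0 < r₁) (h2 : 0 < r₂)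
    (Z : Set (ℂ × ℂ))
    (hZ : Z = {p : ℂ × ℂ | ‖p.1‖ = r₁ ∧ ‖p.2‖ = r₂ ∧
      4 + (M : ℂ) - p.1 - p.1⁻¹ - p.2 - p.2⁻¹ = 0}) :
    (∀ p ∈ Z, ∀ q ∈ Z, ∀ r ∈ Z, p = q ∨ p = r ∨ q = r)
    ∧ (∀ p ∈ Z, ((starRingEnd ℂ) p.1, (starRingEnd ℂ) p.2) ∈ Z) := by
  subst hZ
  have main : ∀ p ∈ {p : ℂ × ℂ | ‖p.1‖ = r₁ ∧ ‖p.2‖ = r₂ ∧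
      4 + (M : ℂ) - p.1 - p.1⁻¹ - p.2 - p.2⁻¹ = 0},
      ∀ q ∈ {p : ℂ × ℂ | ‖p.1‖ = r₁ ∧ ‖p.2‖ = r₂ ∧
      4 + (M : ℂ) - p.1 - p.1⁻¹ - p.2 - p.2⁻¹ = 0},
      q = p ∨ q = ((starRingEnd ℂ) p.1, (starRingEnd ℂ) p.2) := by
    rintro ⟨z, w⟩ ⟨hz, hw, he⟩ ⟨z', w'⟩ ⟨hz', hw', he'⟩
    rcases main_pair M r₁ r₂ hM h1 h2 z w z' w' hz hw hz' hw' he he' with ⟨hzz, hww⟩ | ⟨hzz, hww⟩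
    · exact Or.inl (Prod.ext hzz hww)
    · exact Or.inr (Prod.ext hzz hww)
  constructor
  · intro p hp q hq r hr
    rcases main p hp q hq with h | h
    · exact Or.inl h.symm
    · rcases main p hp r hr with h' | h'
      · exact Or.inr (Or.inl h'.symm)
      · exact Or.inr (Or.inr (h.trans h'.symm))
  · rintro ⟨z, w⟩ ⟨hz, hw, he⟩
    refine ⟨?_, ?_, ?_⟩
    · simpa using hz
    · simpa using hw
    · show 4 + (M:ℂ) - (starRingEnd ℂ) z - ((starRingEnd ℂ) z)⁻¹ - (starRingEnd ℂ) w - ((starRingEnd ℂ) w)⁻¹ = 0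
      have := congrArg (starRingEnd ℂ) he
      simpa [map_sub, map_add, map_inv₀, map_ofNat] using this
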